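/- Let α, γ, δ₁, β₁ ∈ ℂ and R > 0. Let y, z be holomorphic on {x ∈ ℂ : |x| > R} with y nowhere zero, satisfying the P_III system y′ = y²z/2 + δ₁ − y/x and z′ = −y z²/2 + 2γ y + (2/x)(α + β₁/y²) there. If there exists (y∞, z∞) ∈ ℂ² such that (y(x), z(x)) → (y∞, z∞) as |x| → ∞, then (y∞, z∞) is an equilibrium of the autonomous system: y∞² z∞/2 + δ₁ = 0 and −y∞ z∞²/2 + 2γ y∞ = 0. -/

import Mathlib

open Filter Topology

/-- If a complex-valued function on `ℝ` is differentiable for large arguments, its derivative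
tends to `L` at `atTop`, and the function itself tends to a finite limit, then `L = 0`. -/
lemma deriv_lim_eq_zero {u g : ℝ → ℂ} {L c : ℂ} {R : ℝ}
    (hd : ∀ t : ℝ, R < t → HasDerivAt u (g t) t)
    (hg : Tendsto g atTop (𝓝 L))
    (hu : Tendsto u atTop (𝓝 c)) : L = 0 := by
  have h1 : Tendsto (fun t => u (t + 1) - u t) atTop (𝓝 (c - c)) :=
    (hu.comp (tendsto_atTop_add_const_right _ 1 tendsto_id)).sub hu
  have h2 : Tendsto (fun t => u (t + 1) - u t) atTop (𝓝 L) := by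
    rw [Metric.tendsto_nhds]
    intro ε hε
    have hg' := Metric.tendsto_nhds.mp hg (ε / 2) (by positivity)
    rw [eventually_atTop] at hg' ⊢
    obtain ⟨T, hT⟩ := hg'
    refine ⟨max T (R + 1), fun t ht => ?_⟩
    have htT : T ≤ t := le_trans (le_max_left _ _) ht
    have htR : R + 1 ≤ t := le_trans (le_max_right _ _) ht
    have hf : ∀ s ∈ Set.Icc t (t+1),
        HasDerivWithinAt (fun s : ℝ => u s - s • L) (g s - L) (Set.Icc t (t+1)) s := by
      intro s hs
      have hsR : R < s := lt_of_lt_of_le (by linarith) hs.1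
      have h := ((hd s hsR).sub ((hasDerivAt_id s).smul_const L)).hasDerivWithinAt
        (s := Set.Icc t (t+1))
      simpa [Pi.sub_def] using h
    have hb : ∀ s ∈ Set.Icc t (t+1), ‖g s - L‖ ≤ ε / 2 := by
      intro s hs
      have : dist (g s) L < ε / 2 := hT s (le_trans htT hs.1)
      rw [dist_eq_norm] at this
      exact this.le
    have key := Convex.norm_image_sub_le_of_norm_hasDerivWithin_le hf hb (convex_Icc t (t+1))
      (Set.left_mem_Icc.2 (by linarith)) (Set.right_mem_Icc.2 (by linarith))
    have e1 : (u (t+1) - (t+1) • L) - (u t - t • L) = (u (t+1) - u t) - L := by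
      rw [add_smul, one_smul]; ring
    rw [e1] at key
    have e2 : ‖(t+1) - t‖ = (1:ℝ) := by norm_num
    rw [e2, mul_one] at key
    rw [dist_eq_norm]
    linarith
  have := tendsto_nhds_unique h2 h1
  simpa using this

/-- If a holomorphic solution of the P_III system on `{|x| > R}` has a
limit `(yLim, zLim)` as `|x| → ∞`, then `(yLim, zLim)` is an equilibrium of the autonomous
system. -/
theorem limit_point_is_equilibrium (α γ δ₁ β₁ : ℂ) (R : ℝ)
    (y z : ℂ → ℂ)
    (hy : DifferentiableOn ℂ y {x : ℂ | R < ‖x‖})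
    (hz : DifferentiableOn ℂ z {x : ℂ | R < ‖x‖})
    (hy0 : ∀ x : ℂ, R < ‖x‖ → y x ≠ 0)
    (hsys1 : ∀ x : ℂ, R < ‖x‖ →
      deriv y x = (y x) ^ 2 * z x / 2 + δ₁ - y x / x)
    (hsys2 : ∀ x : ℂ, R < ‖x‖ →
      deriv z x = -(y x * (z x) ^ 2) / 2 + 2 * γ * y x
        + (2 / x) * (α + β₁ / (y x) ^ 2))
    (yLim zLim : ℂ)
    (hlim : Tendsto (fun x : ℂ => (y x, z x))
      (Filter.comap (fun x : ℂ => ‖x‖) atTop) (𝓝 (yLim, zLim))) :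
    yLim ^ 2 * zLim / 2 + δ₁ = 0 ∧ -(yLim * zLim ^ 2) / 2 + 2 * γ * yLim = 0 := by
  have hopen : IsOpen {x : ℂ | R < ‖x‖} := isOpen_lt continuous_const continuous_norm
  -- the real axis tends into the comap filter
  have hre : Tendsto (fun t : ℝ => (t : ℂ)) atTop (Filter.comap (fun x : ℂ => ‖x‖) atTop) := by
    rw [tendsto_comap_iff]
    have heq : ((fun x : ℂ => ‖x‖) ∘ fun t : ℝ => (t:ℂ)) = fun t : ℝ => |t| := by
      funext t; exact Complex.norm_real t
    rw [heq]
    exact tendsto_abs_atTop_atTop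
  have hpair : Tendsto (fun t : ℝ => (y (t:ℂ), z (t:ℂ))) atTop (𝓝 (yLim, zLim)) :=
    hlim.comp hre
  have hylim : Tendsto (fun t : ℝ => y (t : ℂ)) atTop (𝓝 yLim) :=
    (continuous_fst.tendsto _).comp hpair
  have hzlim : Tendsto (fun t : ℝ => z (t : ℂ)) atTop (𝓝 zLim) :=
    (continuous_snd.tendsto _).comp hpair
  have hmem : ∀ t : ℝ, R < t → (t : ℂ) ∈ {x : ℂ | R < ‖x‖} := by
    intro t ht
    simp only [Set.mem_setOf_eq, Complex.norm_real]
    exact lt_of_lt_of_le ht (le_abs_self t)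
  have hinv : Tendsto (fun t : ℝ => ((t:ℂ))⁻¹) atTop (𝓝 0) := by
    rw [tendsto_zero_iff_norm_tendsto_zero]
    simp only [norm_inv, Complex.norm_real]
    exact tendsto_inv_atTop_zero.comp tendsto_abs_atTop_atTop
  -- First equation
  have heq1 : yLim ^ 2 * zLim / 2 + δ₁ = 0 := by
    apply deriv_lim_eq_zero (R := R)
      (u := fun t : ℝ => y (t:ℂ))
      (g := fun t : ℝ => y (t:ℂ) ^ 2 * z (t:ℂ) / 2 + δ₁ - y (t:ℂ) / (t:ℂ))
    · intro t ht
      have hmem' := hmem t ht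
      have hR' : R < ‖(t:ℂ)‖ := hmem'
      have hd := (hy.differentiableAt (hopen.mem_nhds hmem')).hasDerivAt
      have := hd.comp_ofReal
      rwa [hsys1 _ hR'] at this
    · have h1 : Tendsto (fun t : ℝ => y (t:ℂ) / (t:ℂ)) atTop (𝓝 0) := by
        have := hylim.mul hinv
        simpa [div_eq_mul_inv] using this
      have := (((hylim.pow 2).mul hzlim).div_const 2).add_const δ₁ |>.sub h1
      simpa using this
    · exact hylim
  refine ⟨heq1, ?_⟩
  -- Second equation
  by_cases hyL : yLim = 0
  · rw [hyL]; ring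
  · apply deriv_lim_eq_zero (R := R)
      (u := fun t : ℝ => z (t:ℂ))
      (g := fun t : ℝ => -(y (t:ℂ) * z (t:ℂ) ^ 2) / 2 + 2 * γ * y (t:ℂ)
        + (2 / (t:ℂ)) * (α + β₁ / (y (t:ℂ)) ^ 2))
    · intro t ht
      have hmem' := hmem t ht
      have hR' : R < ‖(t:ℂ)‖ := hmem'
      have hd := (hz.differentiableAt (hopen.mem_nhds hmem')).hasDerivAt
      have := hd.comp_ofReal
      rwa [hsys2 _ hR'] at this
    · have h2t : Tendsto (fun t : ℝ => (2:ℂ) / (t:ℂ)) atTop (𝓝 0) := by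
        have := hinv.const_mul (2:ℂ)
        simpa [div_eq_mul_inv] using this
      have hfrac : Tendsto (fun t : ℝ => α + β₁ / (y (t:ℂ)) ^ 2) atTop
          (𝓝 (α + β₁ / yLim ^ 2)) := by
        refine tendsto_const_nhds.add ?_
        exact (tendsto_const_nhds.div (hylim.pow 2) (pow_ne_zero 2 hyL))
      have hlast : Tendsto (fun t : ℝ => (2 / (t:ℂ)) * (α + β₁ / (y (t:ℂ)) ^ 2)) atTop
          (𝓝 0) := by
        have := h2t.mul hfrac
        simpa using this
      have hmain := ((((hylim.mul (hzlim.pow 2)).neg).div_const 2).add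
        ((tendsto_const_nhds (x := 2 * γ)).mul hylim)).add hlast
      simpa using hmain
    · exact hzlim
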